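/- Let W' ⊂ W be isotropic subspaces of (V,q) with W' of codimension 1 in W, and suppose there exists v ∈ V with b(v,w') = 0 for all w' ∈ W' and b(v,w) = 1/2 for some fixed w ∈ W \ W'. Let I = Cl·ω_W and I' = Cl·ω_{W'} be the left ideals generated by products of bases of W and W' respectively (with the basis of W extending that of W' by w). Then the map I[1] → I' given by right multiplication by v is a section of the map I' → I[1] given by right multiplication by w: for every ξ ∈ Cl, (ξ·w·ω_{W'})·v·w = ξ·w·ω_{W'}. -/

import Mathlib

open CliffordAlgebra QuadraticMap

/-- `W'` has basis `w₁,…,w_m`, `W` has basis `w,w₁,…,w_m`, all isotropic;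
`v` is orthogonal to `W'` (`b(v,wᵢ) = 0`) and `b(v,w) = 1/2` (`polar Q v w = 1`).
With `ω_{W'} = w₁⋯w_m`, right multiplication by `v` is a section of right multiplication
by `w`: `(ξ·w·ω_{W'})·v·w = ξ·w·ω_{W'}` for all `ξ`. -/
theorem stmt11 {k V : Type*} [Field k] [AddCommGroup V] [Module k V]
    (Q : QuadraticForm k V) (h2 : (2 : k) ≠ 0)
    (m : ℕ) (w : V) (ws : Fin m → V)
    (hli : LinearIndependent k (Fin.cons w ws : Fin (m + 1) → V))
    (hiso : ∀ x ∈ Submodule.span k (Set.range (Fin.cons w ws : Fin (m + 1) → V)),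
      Q x = 0)
    (v : V) (hv : ∀ i, polar Q v (ws i) = 0) (hvw : polar Q v w = 1) :
    ∀ ξ : CliffordAlgebra Q,
      ξ * ι Q w * (List.ofFn fun i => ι Q (ws i)).prod * ι Q v * ι Q w =
        ξ * ι Q w * (List.ofFn fun i => ι Q (ws i)).prod := by
  intro ξ
  have hw_mem : w ∈ Submodule.span k (Set.range (Fin.cons w ws : Fin (m + 1) → V)) :=
    Submodule.subset_span ⟨0, rfl⟩
  have hws_mem : ∀ i, ws i ∈
      Submodule.span k (Set.range (Fin.cons w ws : Fin (m + 1) → V)) :=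
    fun i => Submodule.subset_span ⟨i.succ, rfl⟩
  have hQw : Q w = 0 := hiso w hw_mem
  have hQws : ∀ i, Q (ws i) = 0 := fun i => hiso (ws i) (hws_mem i)
  have hpol : ∀ i, polar Q w (ws i) = 0 := by
    intro i
    have h := hiso (w + ws i) (Submodule.add_mem _ hw_mem (hws_mem i))
    simp [QuadraticMap.polar, hQw, hQws i, h]
  -- c = ι v * ι w commutes with each ι (ws i)
  have key : ∀ x : V, polar Q v x = 0 → polar Q w x = 0 →
      ι Q x * (ι Q v * ι Q w) = (ι Q v * ι Q w) * ι Q x := by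
    intro x h1 h2
    have a1 : ι Q x * ι Q v = - (ι Q v * ι Q x) := by
      have h := CliffordAlgebra.ι_mul_ι_add_swap (Q := Q) v x
      rw [h1, map_zero] at h
      rw [eq_neg_iff_add_eq_zero, add_comm]; exact h
    have a2 : ι Q x * ι Q w = - (ι Q w * ι Q x) := by
      have h := CliffordAlgebra.ι_mul_ι_add_swap (Q := Q) w x
      rw [h2, map_zero] at h
      rw [eq_neg_iff_add_eq_zero, add_comm]; exact h
    calc ι Q x * (ι Q v * ι Q w) = (ι Q x * ι Q v) * ι Q w := by noncomm_ring
      _ = - (ι Q v * (ι Q x * ι Q w)) := by rw [a1]; noncomm_ring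
      _ = ι Q v * (ι Q w * ι Q x) := by rw [a2]; noncomm_ring
      _ = (ι Q v * ι Q w) * ι Q x := by noncomm_ring
  have comm : ∀ l : List V, (∀ x ∈ l, polar Q v x = 0 ∧ polar Q w x = 0) →
      (l.map (ι Q)).prod * (ι Q v * ι Q w) = (ι Q v * ι Q w) * (l.map (ι Q)).prod := by
    intro l
    induction l with
    | nil => simp
    | cons a t ih =>
      intro h
      have ha := h a List.mem_cons_self
      have ih' := ih fun x hx => h x (List.mem_cons_of_mem a hx)
      simp only [List.map_cons, List.prod_cons]
      rw [mul_assoc, ih', ← mul_assoc, key a ha.1 ha.2, mul_assoc]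
  have hofn : (List.ofFn fun i => ι Q (ws i)).prod =
      ((List.ofFn ws).map (ι Q)).prod := by
    rw [List.map_ofFn]; rfl
  have hcomm : (List.ofFn fun i => ι Q (ws i)).prod * (ι Q v * ι Q w) =
      (ι Q v * ι Q w) * (List.ofFn fun i => ι Q (ws i)).prod := by
    rw [hofn]
    apply comm
    intro x hx
    rw [List.mem_ofFn] at hx
    obtain ⟨i, rfl⟩ := hx
    exact ⟨hv i, hpol i⟩
  have hwvw : ι Q w * (ι Q v * ι Q w) = ι Q w := by
    have h := CliffordAlgebra.ι_mul_ι_add_swap (Q := Q) v w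
    rw [hvw, map_one] at h
    have hvwid : ι Q v * ι Q w = 1 - ι Q w * ι Q v := eq_sub_of_add_eq h
    rw [hvwid, mul_sub, mul_one, ← mul_assoc,
      CliffordAlgebra.ι_sq_scalar, hQw, map_zero, zero_mul, sub_zero]
  calc ξ * ι Q w * (List.ofFn fun i => ι Q (ws i)).prod * ι Q v * ι Q w
      = ξ * (ι Q w * ((List.ofFn fun i => ι Q (ws i)).prod * (ι Q v * ι Q w))) := by
        noncomm_ring
    _ = ξ * (ι Q w * ((ι Q v * ι Q w) * (List.ofFn fun i => ι Q (ws i)).prod)) := by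
        rw [hcomm]
    _ = ξ * ((ι Q w * (ι Q v * ι Q w)) * (List.ofFn fun i => ι Q (ws i)).prod) := by
        noncomm_ring
    _ = ξ * ι Q w * (List.ofFn fun i => ι Q (ws i)).prod := by
        rw [hwvw]; noncomm_ring
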